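/- Let a, D, μ > 0, t > 0 and N ∈ ℕ with N ≥ 1. For λ ≥ 0, set α(λ) := 4πλDa + μ, β(λ) := 4a²λ√(πD/α(λ)), and P(λ) := (1 − μ/α(λ))(1 − exp(−2β(λ)√(α(λ)t) − α(λ)t)) + (√π β(λ) μ/α(λ)) e^{β(λ)²} (erf(β(λ) + √(α(λ)t)) − erf(β(λ))). Define g(λ) := 1 − (1 − P(λ))^N. Then g(0) = 0 and g is differentiable at λ = 0 from the right with derivative g′(0) = 4πaN·[(D/μ)(1 − e^{−μt}) + a√(D/μ)·erf(√(μt))]; equivalently, g(λ) = 4πaNλ·[(D/μ)(1 − e^{−μt}) + a√(D/μ)·erf(√(μt))] + O(λ²) as λ → 0⁺. -/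

import Mathlib

/-- The error function `erf x = (2/√π) ∫₀ˣ e^{-u²} du`. -/
noncomputable def erf (x : ℝ) : ℝ :=
  (2 / Real.sqrt Real.pi) * ∫ u in (0:ℝ)..x, Real.exp (-u ^ 2)

/-- `α(λ) = 4πλDa + μ`. -/
noncomputable def alph (a D mu lam : ℝ) : ℝ := 4 * Real.pi * lam * D * a + mu

/-- `β(λ) = 4a²λ√(πD/α(λ))`. -/
noncomputable def bet (a D mu lam : ℝ) : ℝ :=
  4 * a ^ 2 * lam * Real.sqrt (Real.pi * D / alph a D mu lam)

/-- `P(λ)`: the probability that a single degradable molecule hits any receiver within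
time `t` before degrading, as a function of the receiver density `λ`. -/
noncomputable def hitProbDeg (a D mu t lam : ℝ) : ℝ :=
  (1 - mu / alph a D mu lam) *
      (1 - Real.exp (-(2 * bet a D mu lam * Real.sqrt (alph a D mu lam * t))
        - alph a D mu lam * t))
    + (Real.sqrt Real.pi * bet a D mu lam * mu / alph a D mu lam) *
        Real.exp (bet a D mu lam ^ 2) *
        (erf (bet a D mu lam + Real.sqrt (alph a D mu lam * t)) - erf (bet a D mu lam))

lemma erf_zero : erf 0 = 0 := by simp [erf]

lemma erf_hasDerivAt (x : ℝ) :
    HasDerivAt erf (2 / Real.sqrt Real.pi * Real.exp (-x ^ 2)) x := by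
  have hc : Continuous fun u : ℝ => Real.exp (-u ^ 2) := by continuity
  have h := intervalIntegral.integral_hasDerivAt_right
    (hc.intervalIntegrable 0 x) (hc.stronglyMeasurable.stronglyMeasurableAtFilter) hc.continuousAt
  exact h.const_mul (2 / Real.sqrt Real.pi)

lemma erf_diff : Differentiable ℝ erf := fun x => (erf_hasDerivAt x).differentiableAt


/-- Remark 5: the event detection probability `g(λ) = 1 − (1 − P(λ))^N` vanishes at
`λ = 0` and has right derivative
`g′(0) = 4πaN[(D/μ)(1 − e^{−μt}) + a√(D/μ)·erf(√(μt))]` at `λ = 0`. -/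
theorem event_detection_low_density (a D mu t : ℝ) (ha : 0 < a) (hD : 0 < D)
    (hmu : 0 < mu) (ht : 0 < t) (N : ℕ) (hN : 1 ≤ N) :
    (1 - (1 - hitProbDeg a D mu t 0) ^ N = 0) ∧
    HasDerivWithinAt (fun lam : ℝ => 1 - (1 - hitProbDeg a D mu t lam) ^ N)
      (4 * Real.pi * a * (N : ℝ) *
        (D / mu * (1 - Real.exp (-mu * t))
          + a * Real.sqrt (D / mu) * erf (Real.sqrt (mu * t))))
      (Set.Ici 0) 0 := by
  have hpi := Real.pi_pos
  have hA0 : alph a D mu 0 = mu := by simp [alph]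
  have hA0ne : alph a D mu 0 ≠ 0 := by rw [hA0]; exact hmu.ne'
  have hB0 : bet a D mu 0 = 0 := by simp [bet]
  -- alph has derivative 4πDa at 0
  have hA : HasDerivAt (alph a D mu) (4 * Real.pi * D * a) 0 := by
    have : HasDerivAt (fun lam : ℝ => 4 * Real.pi * lam * D * a + mu)
        (4 * Real.pi * D * a) 0 := by
      simpa using ((((hasDerivAt_id (0:ℝ)).const_mul (4 * Real.pi)).mul_const D).mul_const a).add_const mu
    exact this
  -- inner sqrt factor of bet
  have hh : DifferentiableAt ℝ (fun lam => Real.sqrt (Real.pi * D / alph a D mu lam)) 0 := by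
    apply DifferentiableAt.sqrt
    · exact (differentiableAt_const _).div hA.differentiableAt hA0ne
    · rw [hA0]; positivity
  have hh0 : Real.sqrt (Real.pi * D / alph a D mu 0) = Real.sqrt (Real.pi * D / mu) := by
    rw [hA0]
  -- bet has derivative 4a²√(πD/μ) at 0
  have hB : HasDerivAt (bet a D mu) (4 * a ^ 2 * Real.sqrt (Real.pi * D / mu)) 0 := by
    have h1 : HasDerivAt (fun lam : ℝ => 4 * a ^ 2 * lam) (4 * a ^ 2) 0 := by
      simpa using (hasDerivAt_id (0:ℝ)).const_mul (4 * a ^ 2)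
    have := h1.mul hh.hasDerivAt
    exact this.congr_deriv (by simp [hh0])
  -- sqrt(alph * t) differentiable at 0
  have hs : DifferentiableAt ℝ (fun lam => Real.sqrt (alph a D mu lam * t)) 0 := by
    apply DifferentiableAt.sqrt
    · exact hA.differentiableAt.mul_const t
    · rw [hA0]; positivity
  have hs0 : Real.sqrt (alph a D mu 0 * t) = Real.sqrt (mu * t) := by rw [hA0]
  -- first factor of term1
  have h1 : HasDerivAt (fun lam => 1 - mu / alph a D mu lam)
      (4 * Real.pi * D * a / mu) 0 := by
    have hdiv := (hasDerivAt_const (0:ℝ) mu).div hA hA0ne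
    have := (hasDerivAt_const (0:ℝ) (1:ℝ)).sub hdiv
    refine this.congr_deriv ?_
    rw [hA0]
    field_simp
    ring
  -- exp part of term1, differentiable
  have hG : DifferentiableAt ℝ (fun lam => 1 - Real.exp
      (-(2 * bet a D mu lam * Real.sqrt (alph a D mu lam * t)) - alph a D mu lam * t)) 0 := by
    apply (differentiableAt_const _).sub
    apply DifferentiableAt.exp
    exact (((hB.differentiableAt.const_mul 2).mul hs).neg).sub (hA.differentiableAt.mul_const t)
  have hG0 : (1 - Real.exp
      (-(2 * bet a D mu 0 * Real.sqrt (alph a D mu 0 * t)) - alph a D mu 0 * t))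
      = 1 - Real.exp (-(mu * t)) := by
    rw [hB0, hA0]; ring_nf
  -- bracket of term2, differentiable
  set F : ℝ → ℝ := fun lam => (Real.sqrt Real.pi * mu / alph a D mu lam) *
      Real.exp (bet a D mu lam ^ 2) *
      (erf (bet a D mu lam + Real.sqrt (alph a D mu lam * t)) - erf (bet a D mu lam)) with hFdef
  have hF : DifferentiableAt ℝ F 0 := by
    apply DifferentiableAt.mul
    · apply DifferentiableAt.mul
      · exact (differentiableAt_const _).div hA.differentiableAt hA0ne
      · exact (hB.differentiableAt.pow 2).exp
    · exact ((erf_diff _).comp 0 (hB.differentiableAt.add hs)).sub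
        ((erf_diff _).comp 0 hB.differentiableAt)
  have hF0 : F 0 = Real.sqrt Real.pi * erf (Real.sqrt (mu * t)) := by
    simp [hFdef, hB0, hA0, erf_zero, mul_div_assoc, div_self hmu.ne']
  -- P has derivative p' at 0
  set p' : ℝ := 4 * Real.pi * D * a / mu * (1 - Real.exp (-(mu * t)))
      + 4 * a ^ 2 * Real.sqrt (Real.pi * D / mu) * (Real.sqrt Real.pi * erf (Real.sqrt (mu * t)))
      with hp'def
  have hP : HasDerivAt (hitProbDeg a D mu t) p' 0 := by
    have hterm1 := h1.mul hG.hasDerivAt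
    have hterm2 := hB.mul hF.hasDerivAt
    have hsum := hterm1.add hterm2
    have heq : (fun lam => (1 - mu / alph a D mu lam) *
        (1 - Real.exp (-(2 * bet a D mu lam * Real.sqrt (alph a D mu lam * t))
          - alph a D mu lam * t)) + bet a D mu lam * F lam) = hitProbDeg a D mu t := by
      funext lam
      simp only [hitProbDeg, hFdef]
      ring
    rw [← heq]
    refine hsum.congr_deriv ?_
    rw [hG0, hF0, hB0, hA0, div_self hmu.ne', hp'def]
    ring
  have hP0 : hitProbDeg a D mu t 0 = 0 := by
    simp [hitProbDeg, hB0, hA0, div_self hmu.ne']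
  -- derivative of g
  have hg : HasDerivAt (fun lam : ℝ => 1 - (1 - hitProbDeg a D mu t lam) ^ N)
      ((N : ℝ) * p') 0 := by
    have h2 : HasDerivAt (fun lam => 1 - hitProbDeg a D mu t lam) (-p') 0 :=
      ((hasDerivAt_const (0:ℝ) (1:ℝ)).sub hP).congr_deriv (by ring)
    have h3 := h2.pow N
    have h4 := (hasDerivAt_const (0:ℝ) (1:ℝ)).sub h3
    refine h4.congr_deriv ?_
    rw [hP0]
    simp
  constructor
  · rw [hP0]; simp
  · have : (N : ℝ) * p' = 4 * Real.pi * a * (N : ℝ) *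
        (D / mu * (1 - Real.exp (-mu * t))
          + a * Real.sqrt (D / mu) * erf (Real.sqrt (mu * t))) := by
      have hsq : Real.sqrt Real.pi * Real.sqrt (Real.pi * D / mu)
          = Real.pi * Real.sqrt (D / mu) := by
        rw [show Real.pi * D / mu = Real.pi * (D / mu) by ring,
          Real.sqrt_mul hpi.le, ← mul_assoc, Real.mul_self_sqrt hpi.le]
      rw [hp'def, neg_mul,
        show 4 * a ^ 2 * Real.sqrt (Real.pi * D / mu) *
            (Real.sqrt Real.pi * erf (Real.sqrt (mu * t)))
          = 4 * a ^ 2 * (Real.sqrt Real.pi * Real.sqrt (Real.pi * D / mu)) *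
            erf (Real.sqrt (mu * t)) from by ring, hsq]
      ring
    rw [← this]
    exact hg.hasDerivWithinAt
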